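/- (Perturb-and-Average Scoring equals expected score) Let y₁, …, y_N ∈ ℝ^d, σ > 0, define p_σ(x) = (1/N) Σ_{i=1}^N N(x; y_i, σ²I_d) and the optimal denoiser D(x; σ) = (Σ_i N(x; y_i, σ²I_d) y_i)/(Σ_i N(x; y_i, σ²I_d)). Then for every x ∈ ℝ^d, ∫_{ℝ^d} ((D(x + σn; σ) − (x + σn))/σ²) · N(n; 0, I_d) dn = ∫_{ℝ^d} ∇ log p_σ(x + σn) · N(n; 0, I_d) dn; in particular this expectation equals the gradient with respect to x of the lower bound ∫ log p_σ(x + σn) N(n; 0, I_d) dn on log p_{√2·σ}(x). -/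

import Mathlib

open MeasureTheory

/-- The isotropic Gaussian density `N(x; μ, σ²I_d)` on `ℝ^d`. -/
noncomputable def gaussPdf (d : ℕ) (σ : ℝ) (μ x : EuclideanSpace ℝ (Fin d)) : ℝ :=
  (2 * Real.pi * σ ^ 2) ^ (-(d : ℝ) / 2) * Real.exp (-‖x - μ‖ ^ 2 / (2 * σ ^ 2))

/-- The noised empirical density `p_σ(x) = (1/N) Σᵢ N(x; yᵢ, σ²I_d)`. -/
noncomputable def noisedDensity (d N : ℕ) (y : Fin N → EuclideanSpace ℝ (Fin d)) (σ : ℝ)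
    (x : EuclideanSpace ℝ (Fin d)) : ℝ :=
  (1 / N) * ∑ i, gaussPdf d σ (y i) x

/-- The optimal denoiser `D(x; σ)`, the Gaussian-kernel weighted mean of the data points. -/
noncomputable def denoiser (d N : ℕ) (y : Fin N → EuclideanSpace ℝ (Fin d)) (σ : ℝ)
    (x : EuclideanSpace ℝ (Fin d)) : EuclideanSpace ℝ (Fin d) :=
  (∑ i, gaussPdf d σ (y i) x)⁻¹ • ∑ i, gaussPdf d σ (y i) x • y i

open InnerProductSpace Real

variable {d : ℕ}
local notation "E" => EuclideanSpace ℝ (Fin d)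

lemma gaussPdf_pos {σ : ℝ} (hσ : 0 < σ) (μ x : E) : 0 < gaussPdf d σ μ x := by
  unfold gaussPdf
  positivity

lemma hasFDerivAt_normsq (μ x : E) :
    HasFDerivAt (fun z : E => (‖z - μ‖^2 : ℝ)) (toDual ℝ E ((2:ℝ) • (x-μ))) x := by
  have h0 : HasFDerivAt (fun z : E => z - μ) (ContinuousLinearMap.id ℝ E) x :=
    (hasFDerivAt_id x).sub_const μ
  have h1 := h0.inner ℝ h0
  refine HasFDerivAt.congr_of_eventuallyEq (h1.congr_fderiv ?_) (Filter.Eventually.of_forall fun z => ?_)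
  swap
  · exact (real_inner_self_eq_norm_sq _).symm
  · ext h
    simp only [ContinuousLinearMap.coe_comp', Function.comp_apply,
      ContinuousLinearMap.prod_apply, ContinuousLinearMap.coe_id', id_eq,
      fderivInnerCLM_apply, toDual_apply_apply, real_inner_smul_left]
    rw [real_inner_comm h]
    ring

lemma hasFDerivAt_gaussPdf {σ : ℝ} (hσ : 0 < σ) (μ x : E) :
    HasFDerivAt (gaussPdf d σ μ)
      (toDual ℝ E ((σ^2)⁻¹ • gaussPdf d σ μ x • (μ - x))) x := by
  have hσ2 : (σ:ℝ)^2 ≠ 0 := by positivity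
  have key : (gaussPdf d σ μ) = fun z : E =>
      (2 * Real.pi * σ ^ 2) ^ (-(d : ℝ) / 2) * Real.exp ((-(2*σ^2)⁻¹) * ‖z - μ‖^2) := by
    funext z
    unfold gaussPdf
    congr 1
    rw [neg_div, div_eq_inv_mul]
    ring
  rw [key]
  have h2 := (((hasFDerivAt_normsq μ x).const_mul (-(2*σ^2)⁻¹)).exp).const_mul
      ((2 * Real.pi * σ ^ 2) ^ (-(d : ℝ) / 2))
  refine h2.congr_fderiv ?_
  ext v
  simp only [toDual_apply_apply, ContinuousLinearMap.coe_smul', Pi.smul_apply, smul_eq_mul,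
    real_inner_smul_left, inner_sub_left]
  field_simp
  ring

lemma noisedDensity_pos {N : ℕ} (hN : 0 < N) (y : Fin N → E) {σ : ℝ} (hσ : 0 < σ) (z : E) :
    0 < noisedDensity d N y σ z := by
  unfold noisedDensity
  have h1 : (0:ℝ) < (N:ℝ) := by exact_mod_cast hN
  apply mul_pos (by positivity)
  exact Finset.sum_pos (fun i _ => gaussPdf_pos hσ _ _) ⟨⟨0, hN⟩, Finset.mem_univ _⟩

lemma sum_gauss_pos {N : ℕ} (hN : 0 < N) (y : Fin N → E) {σ : ℝ} (hσ : 0 < σ) (z : E) :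
    0 < ∑ i, gaussPdf d σ (y i) z :=
  Finset.sum_pos (fun i _ => gaussPdf_pos hσ _ _) ⟨⟨0, hN⟩, Finset.mem_univ _⟩

lemma hasFDerivAt_log_noised {N : ℕ} (hN : 0 < N) (y : Fin N → E) {σ : ℝ} (hσ : 0 < σ)
    (z : E) :
    HasFDerivAt (fun w => Real.log (noisedDensity d N y σ w))
      (toDual ℝ E ((σ^2)⁻¹ • (denoiser d N y σ z - z))) z := by
  have hσ2 : (σ:ℝ)^2 ≠ 0 := by positivity
  have hNR : (N:ℝ) ≠ 0 := by exact_mod_cast hN.ne'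
  have hS := sum_gauss_pos hN y hσ z
  set S := ∑ i, gaussPdf d σ (y i) z with hSdef
  have hp : HasFDerivAt (noisedDensity d N y σ)
      (toDual ℝ E ((1/(N:ℝ)) • ∑ i, ((σ^2)⁻¹ • gaussPdf d σ (y i) z • (y i - z)))) z := by
    have h := (HasFDerivAt.fun_sum
        (fun (i : Fin N) (_ : i ∈ Finset.univ) => hasFDerivAt_gaussPdf hσ (y i) z)).const_mul
        (1/(N:ℝ))
    have : HasFDerivAt (noisedDensity d N y σ)
        ((1/(N:ℝ)) • ∑ i, toDual ℝ E ((σ^2)⁻¹ • gaussPdf d σ (y i) z • (y i - z))) z := h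
    refine this.congr_fderiv ?_
    rw [← map_sum, ← _root_.map_smul]
  have hne : noisedDensity d N y σ z ≠ 0 := (noisedDensity_pos hN y hσ z).ne'
  have hlog := hp.log hne
  refine hlog.congr_fderiv ?_
  rw [← _root_.map_smul]
  congr 1
  have hpz : noisedDensity d N y σ z = (1/(N:ℝ)) * S := rfl
  rw [hpz, smul_smul]
  have hc : (1/(N:ℝ) * S)⁻¹ * (1/(N:ℝ)) = S⁻¹ := by field_simp
  rw [hc]
  have hsum : ∑ i, ((σ^2)⁻¹ • gaussPdf d σ (y i) z • (y i - z))
      = (σ^2)⁻¹ • ((∑ i, gaussPdf d σ (y i) z • y i) - S • z) := by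
    rw [← Finset.smul_sum]
    congr 1
    rw [hSdef, Finset.sum_smul, ← Finset.sum_sub_distrib]
    exact Finset.sum_congr rfl fun i _ => smul_sub _ _ _
  rw [hsum, smul_comm (S⁻¹) ((σ^2)⁻¹), smul_sub, smul_smul, inv_mul_cancel₀ hS.ne', one_smul]
  rfl

lemma integrable_exp_neg_mul_sq_norm {c : ℝ} (hc : 0 < c) :
    Integrable (fun n : E => Real.exp (-c * ‖n‖^2)) := by
  have h := (GaussianFourier.integrable_cexp_neg_mul_sq_norm_add (V := E) (b := (c:ℂ))
      (by simpa using hc) 0 0).norm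
  refine h.congr (Filter.Eventually.of_forall fun v => ?_)
  simp [Complex.norm_exp, ← Complex.ofReal_pow]

lemma continuous_gaussPdf (σ : ℝ) (μ : E) : Continuous (fun x : E => gaussPdf d σ μ x) := by
  unfold gaussPdf
  fun_prop

lemma integrable_sq_mul_exp_neg_mul_sq_norm {c : ℝ} (hc : 0 < c) :
    Integrable (fun n : E => ‖n‖^2 * Real.exp (-c * ‖n‖^2)) := by
  have key : ∀ n : E, ‖‖n‖^2 * Real.exp (-c * ‖n‖^2)‖ ≤ (2/c) * Real.exp (-(c/2) * ‖n‖^2) := by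
    intro n
    rw [Real.norm_eq_abs, abs_of_nonneg (by positivity)]
    have h1 : ‖n‖^2 ≤ (2/c) * Real.exp ((c/2) * ‖n‖^2) := by
      have h0 : (c/2) * ‖n‖^2 ≤ Real.exp ((c/2) * ‖n‖^2) := by
        have := Real.add_one_le_exp ((c/2) * ‖n‖^2); linarith
      calc ‖n‖^2 = (2/c) * ((c/2) * ‖n‖^2) := by field_simp
        _ ≤ (2/c) * Real.exp ((c/2) * ‖n‖^2) :=
            mul_le_mul_of_nonneg_left h0 (by positivity)
    calc ‖n‖^2 * Real.exp (-c * ‖n‖^2)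
        ≤ ((2/c) * Real.exp ((c/2) * ‖n‖^2)) * Real.exp (-c * ‖n‖^2) := by
          exact mul_le_mul_of_nonneg_right h1 (Real.exp_pos _).le
      _ = (2/c) * Real.exp (-(c/2) * ‖n‖^2) := by
          rw [mul_assoc, ← Real.exp_add]; ring_nf
  exact (((integrable_exp_neg_mul_sq_norm (half_pos hc)).const_mul (2/c)).mono'
    ((by fun_prop : Continuous fun n : E => ‖n‖^2 * Real.exp (-c * ‖n‖^2)).aestronglyMeasurable) (Filter.Eventually.of_forall key))

lemma integrable_gaussPdf_mul (A B : ℝ) :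
    Integrable (fun n : E => gaussPdf d 1 0 n * (A + B * ‖n‖^2)) := by
  have key : ∀ n : E, gaussPdf d 1 0 n * (A + B * ‖n‖^2)
      = A * ((2 * Real.pi) ^ (-(d : ℝ) / 2) * Real.exp (-(1/2) * ‖n‖^2))
        + B * (2 * Real.pi) ^ (-(d : ℝ) / 2) * (‖n‖^2 * Real.exp (-(1/2) * ‖n‖^2)) := by
    intro n
    unfold gaussPdf
    rw [sub_zero]
    ring_nf
  simp_rw [key]
  exact (((integrable_exp_neg_mul_sq_norm (by norm_num : (0:ℝ) < 1/2)).const_mul _).const_mul A).add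
    (((integrable_sq_mul_exp_neg_mul_sq_norm (by norm_num : (0:ℝ) < 1/2)).const_mul _))

lemma continuous_noised {N : ℕ} (y : Fin N → E) (σ : ℝ) :
    Continuous (noisedDensity d N y σ) := by
  unfold noisedDensity
  exact continuous_const.mul (continuous_finset_sum _ fun i _ => continuous_gaussPdf σ (y i))

lemma continuous_denoiser {N : ℕ} (hN : 0 < N) (y : Fin N → E) {σ : ℝ} (hσ : 0 < σ) :
    Continuous (denoiser d N y σ) := by
  unfold denoiser
  exact ((continuous_finset_sum _ fun i _ => continuous_gaussPdf σ (y i)).inv₀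
      fun z => (sum_gauss_pos hN y hσ z).ne').smul
    (continuous_finset_sum _ fun i _ => (continuous_gaussPdf σ (y i)).smul continuous_const)

lemma norm_denoiser_le {N : ℕ} (hN : 0 < N) (y : Fin N → E) {σ : ℝ} (hσ : 0 < σ) (z : E) :
    ‖denoiser d N y σ z‖ ≤ ∑ i, ‖y i‖ := by
  unfold denoiser
  have hS := sum_gauss_pos hN y hσ z
  rw [norm_smul, norm_inv, Real.norm_eq_abs, abs_of_pos hS]
  have h1 : ‖∑ i, gaussPdf d σ (y i) z • y i‖ ≤ ∑ i, gaussPdf d σ (y i) z * ‖y i‖ := by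
    refine (norm_sum_le _ _).trans (le_of_eq (Finset.sum_congr rfl fun i _ => ?_))
    rw [norm_smul, Real.norm_eq_abs, abs_of_pos (gaussPdf_pos hσ _ _)]
  have h2 : ∑ i, gaussPdf d σ (y i) z * ‖y i‖
      ≤ (∑ i, gaussPdf d σ (y i) z) * (∑ i, ‖y i‖) := by
    rw [Finset.sum_mul]
    refine Finset.sum_le_sum fun i _ => ?_
    refine mul_le_mul_of_nonneg_left ?_ (gaussPdf_pos hσ _ _).le
    exact Finset.single_le_sum (fun j _ => norm_nonneg (y j)) (Finset.mem_univ i)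
  calc (∑ i, gaussPdf d σ (y i) z)⁻¹ * ‖∑ i, gaussPdf d σ (y i) z • y i‖
      ≤ (∑ i, gaussPdf d σ (y i) z)⁻¹ * ((∑ i, gaussPdf d σ (y i) z) * (∑ i, ‖y i‖)) := by
        exact mul_le_mul_of_nonneg_left (h1.trans h2) (by positivity)
    _ = ∑ i, ‖y i‖ := by field_simp

lemma logp_abs_bound {N : ℕ} (hN : 0 < N) (y : Fin N → E) {σ : ℝ} (hσ : 0 < σ) (z : E) :
    |Real.log (noisedDensity d N y σ z)|
      ≤ |Real.log ((2 * Real.pi * σ ^ 2) ^ (-(d : ℝ) / 2))|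
        + |Real.log ((1/(N:ℝ)) * (2 * Real.pi * σ ^ 2) ^ (-(d : ℝ) / 2))|
        + (2*σ^2)⁻¹ * ‖z - y ⟨0, hN⟩‖^2 := by
  set C := (2 * Real.pi * σ ^ 2) ^ (-(d : ℝ) / 2) with hC
  have hCpos : 0 < C := by rw [hC]; positivity
  have hNR : (0:ℝ) < (N:ℝ) := by exact_mod_cast hN
  have hupper : noisedDensity d N y σ z ≤ C := by
    unfold noisedDensity
    have : ∑ i, gaussPdf d σ (y i) z ≤ ∑ _i : Fin N, C := by
      refine Finset.sum_le_sum fun i _ => ?_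
      unfold gaussPdf
      rw [← hC]
      nth_rewrite 2 [← mul_one C]
      refine mul_le_mul_of_nonneg_left ?_ hCpos.le
      rw [Real.exp_le_one_iff]
      have : (0:ℝ) < 2 * σ^2 := by positivity
      rw [div_nonpos_iff]
      right
      constructor
      · simp [sq_nonneg]
      · positivity
    calc (1/(N:ℝ)) * ∑ i, gaussPdf d σ (y i) z ≤ (1/(N:ℝ)) * ((N:ℝ) * C) := by
          refine mul_le_mul_of_nonneg_left ?_ (by positivity)
          simpa using this
      _ = C := by field_simp
  have hlower : (1/(N:ℝ)) * gaussPdf d σ (y ⟨0, hN⟩) z ≤ noisedDensity d N y σ z := by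
    unfold noisedDensity
    refine mul_le_mul_of_nonneg_left ?_ (by positivity)
    exact Finset.single_le_sum (fun i _ => (gaussPdf_pos hσ _ _).le) (Finset.mem_univ _)
  have hppos := noisedDensity_pos hN y hσ z
  rw [abs_le]
  constructor
  · have h1 : Real.log ((1/(N:ℝ)) * gaussPdf d σ (y ⟨0, hN⟩) z)
        ≤ Real.log (noisedDensity d N y σ z) :=
      Real.log_le_log (mul_pos (one_div_pos.mpr hNR) (gaussPdf_pos hσ _ _)) hlower
    have h2 : Real.log ((1/(N:ℝ)) * gaussPdf d σ (y ⟨0, hN⟩) z)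
        = Real.log ((1/(N:ℝ)) * C) + (-‖z - y ⟨0, hN⟩‖^2 / (2*σ^2)) := by
      unfold gaussPdf
      rw [← hC, ← mul_assoc, Real.log_mul (mul_pos (one_div_pos.mpr hNR) hCpos).ne' (Real.exp_ne_zero _),
        Real.log_exp]
    have h3 : -‖z - y ⟨0, hN⟩‖^2 / (2*σ^2) = -((2*σ^2)⁻¹ * ‖z - y ⟨0, hN⟩‖^2) := by
      field_simp
    nlinarith [neg_abs_le (Real.log ((1/(N:ℝ)) * C)), abs_nonneg (Real.log C)]
  · have h1 : Real.log (noisedDensity d N y σ z) ≤ Real.log C :=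
      Real.log_le_log hppos hupper
    have h2 : (0:ℝ) ≤ (2*σ^2)⁻¹ * ‖z - y ⟨0, hN⟩‖^2 := by positivity
    nlinarith [le_abs_self (Real.log C), abs_nonneg (Real.log ((1/(N:ℝ)) * C))]

set_option maxHeartbeats 1000000 in
/-- Perturb-and-Average Scoring equals the expected score at the perturbed points, which in
turn equals the gradient of the Jensen lower bound `x ↦ 𝔼_n [log p_σ(x + σn)]`. -/
theorem paas_eq_expected_score (d N : ℕ) (hN : 0 < N)
    (y : Fin N → EuclideanSpace ℝ (Fin d)) (σ : ℝ) (hσ : 0 < σ)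
    (x : EuclideanSpace ℝ (Fin d)) :
    ((∫ n : EuclideanSpace ℝ (Fin d),
        gaussPdf d 1 0 n •
          ((σ ^ 2)⁻¹ • (denoiser d N y σ (x + σ • n) - (x + σ • n))))
      = ∫ n : EuclideanSpace ℝ (Fin d),
          gaussPdf d 1 0 n •
            gradient (fun z => Real.log (noisedDensity d N y σ z)) (x + σ • n)) ∧
    ((∫ n : EuclideanSpace ℝ (Fin d),
        gaussPdf d 1 0 n •
          gradient (fun z => Real.log (noisedDensity d N y σ z)) (x + σ • n))
      = gradient (fun x' : EuclideanSpace ℝ (Fin d) =>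
          ∫ n : EuclideanSpace ℝ (Fin d),
            Real.log (noisedDensity d N y σ (x' + σ • n)) * gaussPdf d 1 0 n) x) := by
  have grad_eq : ∀ z : (EuclideanSpace ℝ (Fin d)),
      gradient (fun w => Real.log (noisedDensity d N y σ w)) z
        = (σ^2)⁻¹ • (denoiser d N y σ z - z) :=
    fun z => (hasGradientAt_iff_hasFDerivAt.mpr (hasFDerivAt_log_noised hN y hσ z)).gradient
  have part1 : (∫ n : (EuclideanSpace ℝ (Fin d)),
        gaussPdf d 1 0 n • ((σ ^ 2)⁻¹ • (denoiser d N y σ (x + σ • n) - (x + σ • n))))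
      = ∫ n : (EuclideanSpace ℝ (Fin d)), gaussPdf d 1 0 n •
          gradient (fun z => Real.log (noisedDensity d N y σ z)) (x + σ • n) := by
    simp_rw [grad_eq]
  refine ⟨part1, ?_⟩
  -- setup
  have hσ2 : (0:ℝ) < σ^2 := by positivity
  set M : ℝ := ∑ i, ‖y i‖ with hM
  have hM0 : 0 ≤ M := Finset.sum_nonneg fun i _ => norm_nonneg _
  set v : (EuclideanSpace ℝ (Fin d)) → (EuclideanSpace ℝ (Fin d)) := fun z => (σ^2)⁻¹ • (denoiser d N y σ z - z) with hv
  set F' : (EuclideanSpace ℝ (Fin d)) → ((EuclideanSpace ℝ (Fin d)) →L[ℝ] ℝ) :=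
    fun n => gaussPdf d 1 0 n • toDual ℝ (EuclideanSpace ℝ (Fin d)) (v (x + σ • n)) with hF'
  have contφ : Continuous fun n : (EuclideanSpace ℝ (Fin d)) => gaussPdf d 1 0 n := continuous_gaussPdf 1 0
  have gp_nonneg : ∀ n : (EuclideanSpace ℝ (Fin d)), 0 ≤ gaussPdf d 1 0 n := fun n => (gaussPdf_pos one_pos _ _).le
  have contv : Continuous v :=
    (((continuous_denoiser hN y hσ).sub continuous_id).const_smul ((σ^2)⁻¹))
  have contshift : ∀ x' : (EuclideanSpace ℝ (Fin d)), Continuous fun n : (EuclideanSpace ℝ (Fin d)) => x' + σ • n :=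
    fun x' => continuous_const.add (continuous_id.const_smul σ)
  have contshift' : Continuous fun w : (EuclideanSpace ℝ (Fin d)) => w + σ • (0:(EuclideanSpace ℝ (Fin d))) := by fun_prop
  -- derivative in x' for each n
  have hderiv : ∀ (x' n : (EuclideanSpace ℝ (Fin d))), HasFDerivAt
      (fun w => Real.log (noisedDensity d N y σ (w + σ • n)) * gaussPdf d 1 0 n)
      (gaussPdf d 1 0 n • toDual ℝ (EuclideanSpace ℝ (Fin d)) (v (x' + σ • n))) x' := by
    intro x' n
    have h1 : HasFDerivAt (fun w : (EuclideanSpace ℝ (Fin d)) => w + σ • n) (ContinuousLinearMap.id ℝ (EuclideanSpace ℝ (Fin d))) x' :=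
      (hasFDerivAt_id x').add_const _
    have h2 := (hasFDerivAt_log_noised hN y hσ (x' + σ • n)).comp x' h1
    have h3 := h2.mul_const (gaussPdf d 1 0 n)
    refine h3.congr_fderiv ?_
    rw [ContinuousLinearMap.comp_id]
  -- norm bound on v
  have hvnorm : ∀ z : (EuclideanSpace ℝ (Fin d)), ‖v z‖ ≤ (σ^2)⁻¹ * (M + ‖z‖) := by
    intro z
    rw [hv]
    simp only [norm_smul, Real.norm_eq_abs, abs_of_pos (inv_pos.mpr hσ2)]
    refine mul_le_mul_of_nonneg_left ?_ (by positivity)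
    exact (norm_sub_le _ _).trans (add_le_add_left (norm_denoiser_le hN y hσ z) _)
  -- Lipschitz bound
  set bound : (EuclideanSpace ℝ (Fin d)) → ℝ := fun n => gaussPdf d 1 0 n *
      (((σ^2)⁻¹ * (M + ‖x‖ + 1 + σ)) + ((σ^2)⁻¹ * σ) * ‖n‖^2) with hbound
  have bound_nonneg : ∀ n, 0 ≤ bound n := by
    intro n
    refine mul_nonneg (gp_nonneg n) (add_nonneg ?_ ?_) <;> positivity
  have bound_int : Integrable bound := integrable_gaussPdf_mul _ _
  have hF'le : ∀ (n x' : EuclideanSpace ℝ (Fin d)), x' ∈ Metric.ball x 1 →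
      ‖gaussPdf d 1 0 n • toDual ℝ (EuclideanSpace ℝ (Fin d)) (v (x' + σ • n))‖ ≤ bound n := by
    intro n x' hx'
    rw [norm_smul, Real.norm_eq_abs, abs_of_nonneg (gp_nonneg n), LinearIsometryEquiv.norm_map,
      hbound]
    refine mul_le_mul_of_nonneg_left ?_ (gp_nonneg n)
    have hx'n : ‖x' + σ • n‖ ≤ ‖x‖ + 1 + σ * ‖n‖ := by
      have h1 : ‖x'‖ ≤ ‖x‖ + 1 := by
        have := mem_ball_iff_norm.mp hx'
        calc ‖x'‖ = ‖x + (x' - x)‖ := by congr 1; abel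
          _ ≤ ‖x‖ + ‖x' - x‖ := norm_add_le _ _
          _ ≤ ‖x‖ + 1 := by linarith
      calc ‖x' + σ • n‖ ≤ ‖x'‖ + ‖σ • n‖ := norm_add_le _ _
        _ = ‖x'‖ + σ * ‖n‖ := by rw [norm_smul, Real.norm_eq_abs, abs_of_pos hσ]
        _ ≤ ‖x‖ + 1 + σ * ‖n‖ := by linarith
    have hn1 : ‖n‖ ≤ 1 + ‖n‖^2 := by nlinarith [sq_nonneg (‖n‖ - 1)]
    calc ‖v (x' + σ • n)‖ ≤ (σ^2)⁻¹ * (M + ‖x' + σ • n‖) := hvnorm _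
      _ ≤ (σ^2)⁻¹ * (M + (‖x‖ + 1 + σ * ‖n‖)) := by
          refine mul_le_mul_of_nonneg_left (by linarith) (by positivity)
      _ ≤ (σ^2)⁻¹ * (M + ‖x‖ + 1 + σ) + (σ^2)⁻¹ * σ * ‖n‖^2 := by
          have h2 : σ * ‖n‖ ≤ σ + σ * ‖n‖^2 := by nlinarith
          have h3 : (0:ℝ) ≤ (σ^2)⁻¹ := by positivity
          nlinarith
  -- Lipschitz property
  have h_lip : ∀ n : EuclideanSpace ℝ (Fin d), LipschitzOnWith (Real.nnabs (bound n))
      (fun x' => Real.log (noisedDensity d N y σ (x' + σ • n)) * gaussPdf d 1 0 n)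
      (Metric.ball x 1) := by
    intro n
    refine (convex_ball x 1).lipschitzOnWith_of_nnnorm_hasFDerivWithin_le
      (f' := fun x' => gaussPdf d 1 0 n • toDual ℝ (EuclideanSpace ℝ (Fin d)) (v (x' + σ • n)))
      (fun x' _ => (hderiv x' n).hasFDerivWithinAt) (fun x' hx' => ?_)
    rw [← NNReal.coe_le_coe, coe_nnnorm, Real.coe_nnabs, abs_of_nonneg (bound_nonneg n)]
    exact hF'le n x' hx'
  -- integrability of F x₀
  have contlog : Continuous fun z => Real.log (noisedDensity d N y σ z) :=
    (continuous_noised y σ).log fun z => (noisedDensity_pos hN y hσ z).ne'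
  set i0 : Fin N := ⟨0, hN⟩ with hi0
  have hF_int : Integrable (fun n : EuclideanSpace ℝ (Fin d) =>
      Real.log (noisedDensity d N y σ (x + σ • n)) * gaussPdf d 1 0 n) := by
    set A0 : ℝ := |Real.log ((2 * Real.pi * σ ^ 2) ^ (-(d : ℝ) / 2))|
        + |Real.log ((1/(N:ℝ)) * (2 * Real.pi * σ ^ 2) ^ (-(d : ℝ) / 2))| with hA0
    refine (integrable_gaussPdf_mul (A0 + (σ^2)⁻¹ * ‖x - y i0‖^2) 1).mono'
      ((contlog.comp (contshift x)).mul contφ).aestronglyMeasurable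
      (Filter.Eventually.of_forall fun n => ?_)
    have hb := logp_abs_bound hN y hσ (x + σ • n)
    have hsq : ‖x + σ • n - y i0‖^2 ≤ 2 * ‖x - y i0‖^2 + 2 * σ^2 * ‖n‖^2 := by
      have h1 : ‖x + σ • n - y i0‖ ≤ ‖x - y i0‖ + σ * ‖n‖ := by
        calc ‖x + σ • n - y i0‖ = ‖(x - y i0) + σ • n‖ := by congr 1; abel
          _ ≤ ‖x - y i0‖ + ‖σ • n‖ := norm_add_le _ _
          _ = ‖x - y i0‖ + σ * ‖n‖ := by rw [norm_smul, Real.norm_eq_abs, abs_of_pos hσ]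
      nlinarith [norm_nonneg (x + σ • n - y i0), norm_nonneg (x - y i0), norm_nonneg n,
        sq_nonneg (‖x - y i0‖ - σ * ‖n‖)]
    rw [Real.norm_eq_abs, abs_mul, abs_of_nonneg (gp_nonneg n), mul_comm]
    refine mul_le_mul_of_nonneg_left ?_ (gp_nonneg n)
    have h2σ : (0:ℝ) < (2*σ^2)⁻¹ := by positivity
    calc |Real.log (noisedDensity d N y σ (x + σ • n))|
        ≤ A0 + (2*σ^2)⁻¹ * ‖x + σ • n - y i0‖^2 := hb
      _ ≤ A0 + (2*σ^2)⁻¹ * (2 * ‖x - y i0‖^2 + 2 * σ^2 * ‖n‖^2) := by nlinarith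
      _ = A0 + (σ^2)⁻¹ * ‖x - y i0‖^2 + 1 * ‖n‖^2 := by
          field_simp
          ring
  -- measurability of F'
  have hF'_meas : AEStronglyMeasurable F' (volume : Measure (EuclideanSpace ℝ (Fin d))) := by
    refine Continuous.aestronglyMeasurable ?_
    refine contφ.smul ?_
    exact (toDual ℝ (EuclideanSpace ℝ (Fin d))).continuous.comp (contv.comp (contshift x))
  obtain ⟨hint, hFD⟩ := hasFDerivAt_integral_of_dominated_loc_of_lip (s := Metric.ball x 1)
    (Metric.ball_mem_nhds x one_pos)
    (Filter.Eventually.of_forall fun x' =>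
      ((contlog.comp (contshift x')).mul contφ).aestronglyMeasurable)
    hF_int hF'_meas (Filter.Eventually.of_forall h_lip) bound_int
    (Filter.Eventually.of_forall fun n => hderiv x n)
  -- swap toDual and integral
  have swap : (∫ n, F' n) = toDual ℝ (EuclideanSpace ℝ (Fin d))
      (∫ n : EuclideanSpace ℝ (Fin d), gaussPdf d 1 0 n • v (x + σ • n)) := by
    have e1 : ∀ n : EuclideanSpace ℝ (Fin d), F' n
        = (toDual ℝ (EuclideanSpace ℝ (Fin d))).toContinuousLinearEquiv
            (gaussPdf d 1 0 n • v (x + σ • n)) := by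
      intro n
      rw [hF']
      simp [_root_.map_smul]
    simp_rw [e1]
    rw [ContinuousLinearEquiv.integral_comp_comm]
    rfl
  have hgrad : HasGradientAt (fun x' : EuclideanSpace ℝ (Fin d) =>
      ∫ n : EuclideanSpace ℝ (Fin d),
        Real.log (noisedDensity d N y σ (x' + σ • n)) * gaussPdf d 1 0 n)
      (∫ n : EuclideanSpace ℝ (Fin d), gaussPdf d 1 0 n • v (x + σ • n)) x := by
    rw [hasGradientAt_iff_hasFDerivAt, ← swap]
    exact hFD
  rw [hgrad.gradient]
  simp_rw [grad_eq]
  rfl
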